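/- Define, for k ∈ {0,…,n}, the finite set V_k = {d − ∑_{j ∈ {0,…,n}\{k}} g_j : g_j ∈ E_j for all j ≠ k} ∩ [f̲_k, f̄_k], where E_0 = {f̲_0, f̄_0} and E_j = {−f̄_j, 0, f̄_j} for j ∈ {1,…,n}, and (with the convention x_0 = 1) let O = ⋃_{k=0}^n {(x,f) ∈ [0,1]^n × ℝ^{n+1} : ∑_{j=0}^n f_j = d, f̲_j x_j ≤ f_j ≤ f̄_j x_j for j ∈ {0,…,n}, f_k ∈ conv(V_k), x_k = 1}. Then conv(S) ⊆ conv(O). -/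

import Mathlib

open scoped BigOperators

/-- Sum is unchanged by adding `t` at `j` and subtracting `t` at `k`. -/
lemma sum_update_two {N : ℕ} (g : Fin N → ℝ) {j k : Fin N} (hjk : j ≠ k) (t : ℝ) :
    ∑ i, Function.update (Function.update g j (g j + t)) k (g k - t) i = ∑ i, g i := by
  classical
  rw [Finset.sum_update_of_mem (Finset.mem_univ k), Finset.sdiff_singleton_eq_erase]
  rw [Finset.sum_update_of_mem (Finset.mem_erase.2 ⟨hjk, Finset.mem_univ j⟩),
    Finset.sdiff_singleton_eq_erase]
  rw [← Finset.add_sum_erase _ g (Finset.mem_univ k),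
    ← Finset.add_sum_erase _ g (Finset.mem_erase.2 ⟨hjk, Finset.mem_univ j⟩)]
  ring

/-- the disjunctive set `O` gives an outer approximation of
`conv(S)`, i.e. `conv(S) ⊆ conv(O)`. -/
theorem convS_subset_convO (n : ℕ) (hn : 1 ≤ n)
    (flo fup : Fin (n + 1) → ℝ)
    (h0 : flo 0 ≤ fup 0)
    (hpos : ∀ j : Fin n, 0 ≤ fup j.succ)
    (hlo : ∀ j : Fin n, flo j.succ = -(fup j.succ))
    (d : ℝ)
    (S : Set ((Fin n → ℝ) × (Fin (n + 1) → ℝ)))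
    (hS : S = {p | (∀ j, p.1 j = 0 ∨ p.1 j = 1) ∧
      (∑ j, p.2 j) = d ∧ flo 0 ≤ p.2 0 ∧ p.2 0 ≤ fup 0 ∧
      ∀ j : Fin n, -(fup j.succ * p.1 j) ≤ p.2 j.succ ∧ p.2 j.succ ≤ fup j.succ * p.1 j})
    -- `xe x` is the extension of `x` by the convention `x₀ = 1`
    (xe : (Fin n → ℝ) → Fin (n + 1) → ℝ)
    (hxe : ∀ x, xe x = Fin.cases (motive := fun _ => ℝ) 1 x)
    -- the finite candidate-value sets `E_j`
    (E : Fin (n + 1) → Set ℝ)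
    (hE : E = Fin.cases (motive := fun _ => Set ℝ) {flo 0, fup 0}
      (fun j => {-(fup j.succ), 0, fup j.succ}))
    -- the sets `V_k`
    (V : Fin (n + 1) → Set ℝ)
    (hV : ∀ k, V k = {v | (∃ g : Fin (n + 1) → ℝ, (∀ j, j ≠ k → g j ∈ E j) ∧
        v = d - ∑ j ∈ Finset.univ.erase k, g j)} ∩ Set.Icc (flo k) (fup k))
    -- the outer-approximation set `O`
    (O : Set ((Fin n → ℝ) × (Fin (n + 1) → ℝ)))
    (hO : O = ⋃ k : Fin (n + 1), {p | (∀ j, 0 ≤ p.1 j ∧ p.1 j ≤ 1) ∧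
      (∑ j, p.2 j) = d ∧
      (∀ i : Fin (n + 1), flo i * xe p.1 i ≤ p.2 i ∧ p.2 i ≤ fup i * xe p.1 i) ∧
      p.2 k ∈ convexHull ℝ (V k) ∧ xe p.1 k = 1}) :
    convexHull ℝ S ⊆ convexHull ℝ O := by
  classical
  refine convexHull_min ?_ (convex_convexHull ℝ O)
  rintro ⟨x, f⟩ hp
  rw [hS] at hp
  obtain ⟨hx', hsum', hlo0, hup0, hb'⟩ := hp
  have hx : ∀ j, x j = 0 ∨ x j = 1 := hx'
  have hsum : (∑ j, f j) = d := hsum'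
  have hb : ∀ j : Fin n, -(fup j.succ * x j) ≤ f j.succ ∧ f j.succ ≤ fup j.succ * x j := hb'
  have hxe0 : xe x 0 = 1 := by rw [hxe]; simp
  have hxes : ∀ j : Fin n, xe x j.succ = x j := fun j => by rw [hxe]; simp
  have hE0 : E 0 = {flo 0, fup 0} := by rw [hE]; simp
  have hEs : ∀ j : Fin n, E j.succ = {-(fup j.succ), 0, fup j.succ} := fun j => by rw [hE]; simp
  have hx01 : ∀ j, 0 ≤ x j ∧ x j ≤ 1 := by
    intro j; rcases hx j with h | h <;> rw [h] <;> norm_num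
  -- if a coordinate `j.succ` is off the grid, then `x j = 1`
  have hx1 : ∀ (j : Fin n) (c : ℝ), flo j.succ * xe x j.succ ≤ c →
      c ≤ fup j.succ * xe x j.succ → c ∉ E j.succ → x j = 1 := by
    intro j c h1 h2 hc
    rcases hx j with h | h
    · exfalso
      rw [hxes, h, mul_zero] at h1 h2
      have hc0 : c = 0 := le_antisymm h2 h1
      exact hc (by rw [hc0, hEs]; simp)
    · exact h
  -- base membership in O, given at most the coordinate k off the grid
  have hbase : ∀ (k : Fin (n + 1)) (g : Fin (n + 1) → ℝ), (∑ i, g i) = d →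
      (∀ i, flo i * xe x i ≤ g i ∧ g i ≤ fup i * xe x i) →
      (∀ j, j ≠ k → g j ∈ E j) → xe x k = 1 → (x, g) ∈ O := by
    intro k g hgsum hgb hgE hxk
    rw [hO]
    refine Set.mem_iUnion.2 ⟨k, ?_⟩
    refine ⟨hx01, hgsum, hgb, ?_, hxk⟩
    apply subset_convexHull
    rw [hV]
    constructor
    · refine ⟨g, hgE, ?_⟩
      have h1 := Finset.add_sum_erase Finset.univ g (Finset.mem_univ k)
      rw [hgsum] at h1
      linarith
    · have h2 := hgb k
      rw [hxk, mul_one, mul_one] at h2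
      exact h2
  -- bracketing a non-grid value between two adjacent grid values
  have hbr : ∀ (g : Fin (n + 1) → ℝ) (i : Fin (n + 1)), flo i * xe x i ≤ g i →
      g i ≤ fup i * xe x i → g i ∉ E i →
      ∃ a b : ℝ, a ∈ E i ∧ b ∈ E i ∧ a < g i ∧ g i < b ∧
        flo i * xe x i ≤ a ∧ b ≤ fup i * xe x i := by
    intro g i
    induction i using Fin.cases with
    | zero =>
      intro h1 h2 hne
      rw [hxe0, mul_one] at h1 h2
      rw [hE0] at hne
      simp only [Set.mem_insert_iff, Set.mem_singleton_iff, not_or] at hne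
      exact ⟨flo 0, fup 0, by rw [hE0]; simp, by rw [hE0]; simp,
        lt_of_le_of_ne h1 (Ne.symm hne.1), lt_of_le_of_ne h2 hne.2,
        by rw [hxe0, mul_one], by rw [hxe0, mul_one]⟩
    | succ j =>
      intro h1 h2 hne
      have hxj := hx1 j (g j.succ) h1 h2 hne
      rw [hxes, hxj, mul_one] at h1 h2
      rw [hlo j] at h1
      have hne' : ¬(g j.succ = -(fup j.succ)) ∧ ¬(g j.succ = 0) ∧ ¬(g j.succ = fup j.succ) := by
        rw [hEs] at hne
        simpa [Set.mem_insert_iff, not_or] using hne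
      rcases lt_or_gt_of_ne hne'.2.1 with hneg | hposg
      · exact ⟨-(fup j.succ), 0, by rw [hEs]; simp, by rw [hEs]; simp,
          lt_of_le_of_ne h1 (Ne.symm hne'.1), hneg,
          by rw [hxes, hxj, mul_one, hlo j],
          by rw [hxes, hxj, mul_one]; exact hpos j⟩
      · exact ⟨0, fup j.succ, by rw [hEs]; simp, by rw [hEs]; simp,
          hposg, lt_of_le_of_ne h2 hne'.2.2,
          by rw [hxes, hxj, mul_one, hlo j]; linarith [hpos j],
          by rw [hxes, hxj, mul_one]⟩
  -- main induction on the number of off-grid coordinates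
  have hmain : ∀ (m : ℕ) (g : Fin (n + 1) → ℝ),
      (Finset.univ.filter fun i => g i ∉ E i).card ≤ m → (∑ i, g i) = d →
      (∀ i, flo i * xe x i ≤ g i ∧ g i ≤ fup i * xe x i) →
      (x, g) ∈ convexHull ℝ O := by
    intro m
    induction m with
    | zero =>
      intro g hcard hgsum hgb
      have hall : ∀ i, g i ∈ E i := by
        intro i; by_contra hi
        have hmem : i ∈ Finset.univ.filter fun i => g i ∉ E i :=
          Finset.mem_filter.2 ⟨Finset.mem_univ i, hi⟩
        have := Finset.card_pos.2 ⟨i, hmem⟩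
        omega
      exact subset_convexHull ℝ O (hbase 0 g hgsum hgb (fun j _ => hall j) hxe0)
    | succ m ih =>
      intro g hcard hgsum hgb
      by_cases htwo : ∃ j k : Fin (n + 1), j ≠ k ∧ g j ∉ E j ∧ g k ∉ E k
      · obtain ⟨j, k, hjk, hgj, hgk⟩ := htwo
        obtain ⟨aj, bj, hajE, hbjE, haj, hbj, hajL, hbjU⟩ := hbr g j (hgb j).1 (hgb j).2 hgj
        obtain ⟨ak, bk, hakE, hbkE, hak, hbk, hakL, hbkU⟩ := hbr g k (hgb k).1 (hgb k).2 hgk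
        set tp := min (bj - g j) (g k - ak) with htp
        set tm := min (g j - aj) (bk - g k) with htm
        have htp0 : 0 < tp := lt_min (by linarith) (by linarith)
        have htm0 : 0 < tm := lt_min (by linarith) (by linarith)
        have htp1 : tp ≤ bj - g j := min_le_left _ _
        have htp2 : tp ≤ g k - ak := min_le_right _ _
        have htm1 : tm ≤ g j - aj := min_le_left _ _
        have htm2 : tm ≤ bk - g k := min_le_right _ _
        set gp := Function.update (Function.update g j (g j + tp)) k (g k - tp) with hgp
        set gm := Function.update (Function.update g j (g j - tm)) k (g k + tm) with hgm
        have hgpj : gp j = g j + tp := by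
          rw [hgp, Function.update_of_ne hjk, Function.update_self]
        have hgpk : gp k = g k - tp := by rw [hgp, Function.update_self]
        have hgpo : ∀ i, i ≠ j → i ≠ k → gp i = g i := fun i h1 h2 => by
          rw [hgp, Function.update_of_ne h2, Function.update_of_ne h1]
        have hgmj : gm j = g j - tm := by
          rw [hgm, Function.update_of_ne hjk, Function.update_self]
        have hgmk : gm k = g k + tm := by rw [hgm, Function.update_self]
        have hgmo : ∀ i, i ≠ j → i ≠ k → gm i = g i := fun i h1 h2 => by
          rw [hgm, Function.update_of_ne h2, Function.update_of_ne h1]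
        have hjmem : j ∈ Finset.univ.filter fun i => g i ∉ E i :=
          Finset.mem_filter.2 ⟨Finset.mem_univ j, hgj⟩
        have hkmem : k ∈ Finset.univ.filter fun i => g i ∉ E i :=
          Finset.mem_filter.2 ⟨Finset.mem_univ k, hgk⟩
        -- cardinality bound helper
        have hcsub : ∀ (h : Fin (n + 1) → ℝ) (i0 : Fin (n + 1)),
            i0 ∈ (Finset.univ.filter fun i => g i ∉ E i) →
            (∀ i, i ≠ j → i ≠ k → h i = g i) → h i0 ∈ E i0 →
            ((i0 = j ∨ i0 = k)) →
            (Finset.univ.filter fun i => h i ∉ E i).card ≤ m := by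
          intro h i0 hi0mem hho hi0E _
          have hsub : (Finset.univ.filter fun i => h i ∉ E i) ⊆
              (Finset.univ.filter fun i => g i ∉ E i).erase i0 := by
            intro i hi
            rw [Finset.mem_filter] at hi
            have hii0 : i ≠ i0 := by rintro rfl; exact hi.2 hi0E
            refine Finset.mem_erase.2 ⟨hii0, Finset.mem_filter.2 ⟨Finset.mem_univ i, ?_⟩⟩
            by_cases hij : i = j
            · subst hij; exact hgj
            · by_cases hik : i = k
              · subst hik; exact hgk
              · rw [hho i hij hik] at hi; exact hi.2
          calc (Finset.univ.filter fun i => h i ∉ E i).card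
              ≤ ((Finset.univ.filter fun i => g i ∉ E i).erase i0).card :=
                Finset.card_le_card hsub
            _ = (Finset.univ.filter fun i => g i ∉ E i).card - 1 :=
                Finset.card_erase_of_mem hi0mem
            _ ≤ m := by omega
        have hcardp : (Finset.univ.filter fun i => gp i ∉ E i).card ≤ m := by
          rcases min_cases (bj - g j) (g k - ak) with ⟨he, _⟩ | ⟨he, _⟩
          · refine hcsub gp j hjmem hgpo ?_ (Or.inl rfl)
            rw [hgpj, htp, he]
            have : g j + (bj - g j) = bj := by ring
            rw [this]; exact hbjE
          · refine hcsub gp k hkmem hgpo ?_ (Or.inr rfl)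
            rw [hgpk, htp, he]
            have : g k - (g k - ak) = ak := by ring
            rw [this]; exact hakE
        have hcardm : (Finset.univ.filter fun i => gm i ∉ E i).card ≤ m := by
          rcases min_cases (g j - aj) (bk - g k) with ⟨he, _⟩ | ⟨he, _⟩
          · refine hcsub gm j hjmem hgmo ?_ (Or.inl rfl)
            rw [hgmj, htm, he]
            have : g j - (g j - aj) = aj := by ring
            rw [this]; exact hajE
          · refine hcsub gm k hkmem hgmo ?_ (Or.inr rfl)
            rw [hgmk, htm, he]
            have : g k + (bk - g k) = bk := by ring
            rw [this]; exact hbkE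
        have hsump : (∑ i, gp i) = d := by
          rw [hgp, sum_update_two g hjk tp, hgsum]
        have hsumm : (∑ i, gm i) = d := by
          have h1 : g j - tm = g j + (-tm) := by ring
          have h2 : g k + tm = g k - (-tm) := by ring
          rw [hgm, h1, h2, sum_update_two g hjk (-tm), hgsum]
        have hgpb : ∀ i, flo i * xe x i ≤ gp i ∧ gp i ≤ fup i * xe x i := by
          intro i
          by_cases hij : i = j
          · subst hij; rw [hgpj]
            exact ⟨by linarith [(hgb i).1], by linarith⟩
          · by_cases hik : i = k
            · subst hik; rw [hgpk]
              exact ⟨by linarith, by linarith [(hgb i).2]⟩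
            · rw [hgpo i hij hik]; exact hgb i
        have hgmb : ∀ i, flo i * xe x i ≤ gm i ∧ gm i ≤ fup i * xe x i := by
          intro i
          by_cases hij : i = j
          · subst hij; rw [hgmj]
            exact ⟨by linarith, by linarith [(hgb i).2]⟩
          · by_cases hik : i = k
            · subst hik; rw [hgmk]
              exact ⟨by linarith [(hgb i).1], by linarith⟩
            · rw [hgmo i hij hik]; exact hgb i
        have hpmem := ih gp hcardp hsump hgpb
        have hmmem := ih gm hcardm hsumm hgmb
        have hs0 : (0 : ℝ) < tp + tm := by linarith
        have hab : tm / (tp + tm) + tp / (tp + tm) = 1 := by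
          field_simp
          ring
        have hmul : tm / (tp + tm) * tp = tp / (tp + tm) * tm := by
          field_simp
        have key := (convex_convexHull ℝ O) hpmem hmmem
          (by positivity : (0:ℝ) ≤ tm / (tp + tm))
          (by positivity : (0:ℝ) ≤ tp / (tp + tm)) hab
        have heq : (tm / (tp + tm)) • ((x, gp) : (Fin n → ℝ) × (Fin (n + 1) → ℝ)) +
            (tp / (tp + tm)) • ((x, gm) : (Fin n → ℝ) × (Fin (n + 1) → ℝ)) = (x, g) := by
          simp only [Prod.smul_mk, Prod.mk_add_mk, Prod.mk.injEq]
          constructor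
          · funext i1
            simp only [Pi.add_apply, Pi.smul_apply, smul_eq_mul]
            linear_combination (x i1) * hab
          · funext i1
            simp only [Pi.add_apply, Pi.smul_apply, smul_eq_mul]
            by_cases hij : i1 = j
            · subst hij; rw [hgpj, hgmj]
              linear_combination (g i1) * hab + hmul
            · by_cases hik : i1 = k
              · subst hik; rw [hgpk, hgmk]
                linear_combination (g i1) * hab - hmul
              · rw [hgpo i1 hij hik, hgmo i1 hij hik]
                linear_combination (g i1) * hab
        rwa [heq] at key
      · -- at most one coordinate off the grid
        by_cases hall : ∀ i, g i ∈ E i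
        · exact subset_convexHull ℝ O (hbase 0 g hgsum hgb (fun j _ => hall j) hxe0)
        · push_neg at hall
          obtain ⟨k, hk⟩ := hall
          have hothers : ∀ j, j ≠ k → g j ∈ E j := by
            intro j hj
            by_contra hj'
            exact htwo ⟨j, k, hj, hj', hk⟩
          have hxk : xe x k = 1 := by
            rcases Fin.eq_zero_or_eq_succ k with rfl | ⟨j, rfl⟩
            · exact hxe0
            · rw [hxes, hx1 j (g j.succ) (hgb _).1 (hgb _).2 hk]
          exact subset_convexHull ℝ O (hbase k g hgsum hgb hothers hxk)
  -- apply the induction to `f`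
  have hLU : ∀ i, flo i * xe x i ≤ f i ∧ f i ≤ fup i * xe x i := by
    intro i
    rcases Fin.eq_zero_or_eq_succ i with rfl | ⟨j, rfl⟩
    · rw [hxe0, mul_one, mul_one]; exact ⟨hlo0, hup0⟩
    · rw [hxes, hlo j]
      have h1 : -(fup j.succ) * x j = -(fup j.succ * x j) := by ring
      rw [h1]
      exact hb j
  exact hmain _ f le_rfl hsum hLU
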